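/- (Light-cone Lemma, Lemma 3 of the paper.) Let $p^\mu$ be a nonzero light-like vector in Minkowski space $\mathbb{R}^{D-1,1}$ (so $\eta_{\mu\nu}p^\mu p^\nu=0$, $p\neq 0$). On the Fock space $\wedge_{[s]}(\mathbb{R}^D)$ with creation operators $\theta_i^\mu$ and annihilation operators $\bar\theta_i^\mu$ satisfying $[\theta_i^\mu,\bar\theta_j^\nu]_+=\delta_{ij}\eta^{\mu\nu}$, define $\bar p_i = p_\mu\theta_i^\mu$ and $\bar p_i^\dagger = p_\mu\bar\theta_i^\mu$. Let $\alpha\in\wedge^{\ell_1,\dots,\ell_s}_{[s]}(\mathbb{R}^D)$ with every $\ell_i>0$ satisfy $\bar p_i\,\alpha = 0$ and $\bar p_i^\dagger\,\alpha = 0$ for all $i\in\{1,\dots,s\}$. Then there exists $\beta\in\wedge^{\ell_1-1,\dots,\ell_s-1}_{[s]}(V_\perp)$, where $V_\perp\subset\mathbb{R}^D$ is a $(D-2)$-dimensional subspace transverse to $p$, such that $\alpha = \bar p_1\bar p_2\cdots\bar p_s\,\beta$. -/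

import Mathlib

namespace Stmt15

/-- mostly-minus Minkowski metric `η = diag(1, -1, …, -1)` -/
def mink (D : ℕ) (μ ν : Fin D) : ℝ :=
  if μ = ν then (if (μ : ℕ) = 0 then 1 else -1) else 0

/-- the Minkowski bilinear form on `ℝ^{D-1,1}` -/
def bil (D : ℕ) (u w : Fin D → ℝ) : ℝ :=
  ∑ μ : Fin D, ∑ ν : Fin D, mink D μ ν * u μ * w ν

/-- lowered components `p_μ = η_{μν} p^ν` -/
def plow (D : ℕ) (p : Fin D → ℝ) (μ : Fin D) : ℝ := ∑ ν : Fin D, mink D μ ν * p ν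

/-- components of an element of the Fock space `∧_{[s]}(ℝ^D)` of multidegree `m`:
the `i`-th factor carries `m i` antisymmetric indices. -/
abbrev MF (D s : ℕ) (m : Fin s → ℕ) := ((i : Fin s) → Fin (m i) → Fin D) → ℝ

/-- complete antisymmetry in each column (so the components define a multiform). -/
def ColAntisym {D s : ℕ} (m : Fin s → ℕ) (α : MF D s m) : Prop :=
  ∀ (i : Fin s) (σ : Equiv.Perm (Fin (m i))) (v : (j : Fin s) → Fin (m j) → Fin D),
    α (Function.update v i (fun a => v i (σ a))) = ((Equiv.Perm.sign σ : ℤ) : ℝ) * α v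

/-- `p̄ᵢ α = 0`: wedging the covector `p_μ` into the `i`-th column kills `α`. -/
def WedgeZero {D s : ℕ} (m : Fin s → ℕ) (p : Fin D → ℝ) (α : MF D s m) : Prop :=
  ∀ (i : Fin s) (v : (j : Fin s) → Fin (m j) → Fin D) (ρ : Fin D),
    (∑ σ : Equiv.Perm (Fin (m i + 1)),
      ((Equiv.Perm.sign σ : ℤ) : ℝ) *
        plow D p ((Fin.cons ρ (v i) : Fin (m i + 1) → Fin D) (σ 0)) *
        α (Function.update v i
          (fun a => (Fin.cons ρ (v i) : Fin (m i + 1) → Fin D) (σ a.succ)))) = 0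

/-- `p̄ᵢ† α = 0`: contracting `p^μ` into any slot of the `i`-th column kills `α`
(equivalently, contraction on the first slot for all index configurations). -/
def ContractZero {D s : ℕ} (m : Fin s → ℕ) (hm : ∀ i, 0 < m i) (p : Fin D → ℝ)
    (α : MF D s m) : Prop :=
  ∀ (i : Fin s) (v : (j : Fin s) → Fin (m j) → Fin D),
    (∑ μ : Fin D, p μ * α (Function.update v i (Function.update (v i) ⟨0, hm i⟩ μ))) = 0

/-- every index of `β` is transverse to the vector `w`: contracting `w^μ` into any
slot gives zero. -/
def SlotTransverse {D s : ℕ} (m : Fin s → ℕ) (w : Fin D → ℝ) (β : MF D s m) : Prop :=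
  ∀ (i : Fin s) (a : Fin (m i)) (u : (j : Fin s) → Fin (m j) → Fin D),
    (∑ μ : Fin D, w μ * β (Function.update u i (Function.update (u i) a μ))) = 0

/-- components of `p̄₁ p̄₂ ⋯ p̄ₛ β` (wedging the covector `p_μ` into every column). -/
noncomputable def wedgeAll {D s : ℕ} (ℓ : Fin s → ℕ) (hℓ : ∀ i, 0 < ℓ i)
    (p : Fin D → ℝ) (β : MF D s (fun i => ℓ i - 1)) : MF D s ℓ :=
  fun v => (∏ i : Fin s, (((ℓ i - 1).factorial : ℝ)))⁻¹ *
    ∑ σ : (i : Fin s) → Equiv.Perm (Fin (ℓ i)),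
      (∏ i : Fin s, ((Equiv.Perm.sign (σ i) : ℤ) : ℝ)) *
      (∏ i : Fin s, plow D p (v i (σ i ⟨0, hℓ i⟩))) *
      β (fun i a => v i (σ i ⟨(a : ℕ) + 1, by
        have h : (a : ℕ) < ℓ i - 1 := a.isLt
        omega⟩))

/-- the transverse hyperplane `V⊥ = {v : η(v,p) = 0, η(v,q) = 0}` -/
def perpSpace (D : ℕ) (p q : Fin D → ℝ) : Submodule ℝ (Fin D → ℝ) where
  carrier := {v | bil D v p = 0 ∧ bil D v q = 0}
  add_mem' := by
    intro a b ha hb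
    have key : ∀ u u' w : Fin D → ℝ, bil D (u + u') w = bil D u w + bil D u' w := by
      intro u u' w
      simp only [bil]
      rw [← Finset.sum_add_distrib]
      refine Finset.sum_congr rfl fun μ _ => ?_
      rw [← Finset.sum_add_distrib]
      refine Finset.sum_congr rfl fun ν _ => ?_
      simp only [Pi.add_apply]
      ring
    exact ⟨by rw [key, ha.1, hb.1, add_zero], by rw [key, ha.2, hb.2, add_zero]⟩
  zero_mem' := by
    constructor <;> simp [bil]
  smul_mem' := by
    intro c a ha
    have key : ∀ u w : Fin D → ℝ, bil D (c • u) w = c * bil D u w := by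
      intro u w
      simp only [bil, Finset.mul_sum]
      refine Finset.sum_congr rfl fun μ _ => ?_
      refine Finset.sum_congr rfl fun ν _ => ?_
      simp only [Pi.smul_apply, smul_eq_mul]
      ring
    exact ⟨by rw [key, ha.1, mul_zero], by rw [key, ha.2, mul_zero]⟩


/-! ### Auxiliary machinery for the light-cone lemma -/

section LightconeAux

lemma bil_eq {D : ℕ} (u w : Fin D → ℝ) :
    bil D u w = ∑ μ : Fin D, (if (μ : ℕ) = 0 then 1 else -1) * u μ * w μ := by
  unfold bil mink
  refine Finset.sum_congr rfl fun μ _ => ?_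
  rw [Finset.sum_eq_single μ]
  · simp
  · intro ν _ hν
    rw [if_neg (fun h => hν h.symm)]
    ring
  · simp

lemma plow_eq {D : ℕ} (p : Fin D → ℝ) (μ : Fin D) :
    plow D p μ = (if (μ : ℕ) = 0 then 1 else -1) * p μ := by
  unfold plow mink
  rw [Finset.sum_eq_single μ]
  · simp
  · intro ν _ hν
    rw [if_neg (fun h => hν h.symm)]
    ring
  · simp

lemma bil_comm {D : ℕ} (u w : Fin D → ℝ) : bil D u w = bil D w u := by
  rw [bil_eq, bil_eq]
  exact Finset.sum_congr rfl fun μ _ => by ring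

lemma sum_q_plow {D : ℕ} (p q : Fin D → ℝ) :
    ∑ μ : Fin D, q μ * plow D p μ = bil D q p := by
  rw [bil_eq]
  refine Finset.sum_congr rfl fun μ _ => ?_
  rw [plow_eq]; ring

lemma bil_add_left {D : ℕ} (u u' w : Fin D → ℝ) :
    bil D (u + u') w = bil D u w + bil D u' w := by
  simp only [bil_eq, ← Finset.sum_add_distrib]
  exact Finset.sum_congr rfl fun μ _ => by
    simp only [Pi.add_apply]; split <;> ring

lemma bil_smul_left {D : ℕ} (c : ℝ) (u w : Fin D → ℝ) :
    bil D (c • u) w = c * bil D u w := by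
  simp only [bil_eq, Finset.mul_sum]
  exact Finset.sum_congr rfl fun μ _ => by
    simp only [Pi.smul_apply, smul_eq_mul]; split <;> ring

lemma exists_q {D : ℕ} (p : Fin D → ℝ) (hp : p ≠ 0) (hnull : bil D p p = 0) :
    2 ≤ D ∧ ∃ q : Fin D → ℝ, bil D q q = 0 ∧ bil D p q = 1 ∧ bil D q p = 1 := by
  have hD0 : 0 < D := by
    rcases Nat.eq_zero_or_pos D with h | h
    · exfalso; apply hp; funext μ; exact absurd μ.isLt (by omega)
    · exact h
  set z : Fin D := ⟨0, hD0⟩ with hz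
  have hmem : z ∈ Finset.univ := Finset.mem_univ z
  have hsplit : ∑ μ : Fin D, (if (μ : ℕ) = 0 then 1 else -1) * p μ * p μ
      = p z * p z - ∑ μ ∈ Finset.univ.erase z, p μ * p μ := by
    rw [← Finset.add_sum_erase _ _ hmem]
    have h1 : (if (z : ℕ) = 0 then (1:ℝ) else -1) * p z * p z = p z * p z := by
      simp [hz]
    rw [h1]
    have h2 : ∀ μ ∈ Finset.univ.erase z,
        (if (μ : ℕ) = 0 then (1:ℝ) else -1) * p μ * p μ = -(p μ * p μ) := by
      intro μ hμ
      have hne : μ ≠ z := (Finset.mem_erase.mp hμ).1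
      have : (μ : ℕ) ≠ 0 := fun h => hne (Fin.ext h)
      rw [if_neg this]; ring
    rw [Finset.sum_congr rfl h2, Finset.sum_neg_distrib]
    ring
  have hkey : ∑ μ ∈ Finset.univ.erase z, p μ * p μ = p z * p z := by
    have := hnull
    rw [bil_eq, hsplit] at this
    linarith
  have hpz : p z ≠ 0 := by
    intro h0
    have hzero : ∑ μ ∈ Finset.univ.erase z, p μ * p μ = 0 := by rw [hkey, h0]; ring
    have hall : ∀ μ ∈ Finset.univ.erase z, p μ * p μ = 0 := by
      rw [← Finset.sum_eq_zero_iff_of_nonneg (fun i _ => mul_self_nonneg (p i))]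
      exact hzero
    apply hp
    funext μ
    by_cases hμ : μ = z
    · rw [hμ, h0]; rfl
    · have := hall μ (Finset.mem_erase.mpr ⟨hμ, Finset.mem_univ μ⟩)
      have := mul_self_eq_zero.mp this
      simpa using this
  have hD2 : 2 ≤ D := by
    by_contra h
    have : Finset.univ.erase z = (∅ : Finset (Fin D)) := by
      ext μ
      simp only [Finset.mem_erase, Finset.mem_univ, and_true, Finset.notMem_empty, iff_false,
        not_not]
      apply Fin.ext
      have := μ.isLt
      simp [hz]; omega
    rw [this, Finset.sum_empty] at hkey
    exact hpz (mul_self_eq_zero.mp hkey.symm)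
  have hsum2 : ∑ μ : Fin D, p μ * p μ = 2 * (p z * p z) := by
    rw [← Finset.add_sum_erase _ _ hmem, hkey]; ring
  refine ⟨hD2, fun μ => (2 * (p z * p z))⁻¹ * (if (μ : ℕ) = 0 then p μ else -p μ), ?_, ?_, ?_⟩
  · rw [bil_eq]
    have : ∀ μ : Fin D, (if (μ : ℕ) = 0 then (1:ℝ) else -1) *
        ((2 * (p z * p z))⁻¹ * (if (μ : ℕ) = 0 then p μ else -p μ)) *
        ((2 * (p z * p z))⁻¹ * (if (μ : ℕ) = 0 then p μ else -p μ))
        = (2 * (p z * p z))⁻¹ ^ 2 * ((if (μ : ℕ) = 0 then (1:ℝ) else -1) * p μ * p μ) := by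
      intro μ; split <;> ring
    rw [Finset.sum_congr rfl (fun μ _ => this μ), ← Finset.mul_sum, ← bil_eq, hnull, mul_zero]
  · rw [bil_eq]
    have : ∀ μ : Fin D, (if (μ : ℕ) = 0 then (1:ℝ) else -1) * p μ *
        ((2 * (p z * p z))⁻¹ * (if (μ : ℕ) = 0 then p μ else -p μ))
        = (2 * (p z * p z))⁻¹ * (p μ * p μ) := by
      intro μ; split <;> ring
    rw [Finset.sum_congr rfl (fun μ _ => this μ), ← Finset.mul_sum, hsum2]
    field_simp
  · rw [bil_comm, bil_eq]
    have : ∀ μ : Fin D, (if (μ : ℕ) = 0 then (1:ℝ) else -1) * p μ *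
        ((2 * (p z * p z))⁻¹ * (if (μ : ℕ) = 0 then p μ else -p μ))
        = (2 * (p z * p z))⁻¹ * (p μ * p μ) := by
      intro μ; split <;> ring
    rw [Finset.sum_congr rfl (fun μ _ => this μ), ← Finset.mul_sum, hsum2]
    field_simp

lemma finrank_perp {D : ℕ} (p q : Fin D → ℝ) (hD : 2 ≤ D) (hpp : bil D p p = 0)
    (hqq : bil D q q = 0) (hpq : bil D p q = 1) (hqp : bil D q p = 1) :
    Module.finrank ℝ (perpSpace D p q) = D - 2 := by
  let f : (Fin D → ℝ) →ₗ[ℝ] ℝ :=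
    { toFun := fun v => bil D v p
      map_add' := fun a b => bil_add_left a b p
      map_smul' := fun c v => by simpa using bil_smul_left c v p }
  let g : (Fin D → ℝ) →ₗ[ℝ] ℝ :=
    { toFun := fun v => bil D v q
      map_add' := fun a b => bil_add_left a b q
      map_smul' := fun c v => by simpa using bil_smul_left c v q }
  let L := f.prod g
  have hker : perpSpace D p q = LinearMap.ker L := by
    ext v
    simp only [LinearMap.mem_ker, L, LinearMap.prod_apply, Prod.mk_eq_zero, Function.prod]
    exact Iff.rfl
  have hsurj : Function.Surjective L := by
    rintro ⟨a, b⟩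
    refine ⟨b • p + a • q, ?_⟩
    have h1 : f (b • p + a • q) = a := by
      show bil D (b • p + a • q) p = a
      rw [bil_add_left, bil_smul_left, bil_smul_left, hpp, hqp]; ring
    have h2 : g (b • p + a • q) = b := by
      show bil D (b • p + a • q) q = b
      rw [bil_add_left, bil_smul_left, bil_smul_left, hpq, hqq]; ring
    show (f _, g _) = (a, b)
    rw [h1, h2]
  have hrn := LinearMap.finrank_range_add_finrank_ker L
  rw [LinearMap.range_eq_top.mpr hsurj, finrank_top, Module.finrank_fin_fun] at hrn
  have h2 : Module.finrank ℝ (ℝ × ℝ) = 2 := by simp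
  rw [h2] at hrn
  rw [hker]
  omega

end LightconeAux


section Combinatorics

variable {D s : ℕ} {ℓ : Fin s → ℕ}

/-- sign `(-1)^[k ≠ 0]` -/
def sgnk {n : ℕ} (k : Fin (n + 1)) : ℝ := if k = 0 then 1 else -1

lemma sgnk_sq {n : ℕ} (k : Fin (n + 1)) : sgnk k * sgnk k = 1 := by
  unfold sgnk; split <;> norm_num

lemma lc (hℓ : ∀ i, 0 < ℓ i) (i : Fin s) : ℓ i - 1 + 1 = ℓ i := by
  have := hℓ i; omega

/-- cast `Fin (ℓ i - 1 + 1) → Fin (ℓ i)` -/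
def ecast (hℓ : ∀ i, 0 < ℓ i) (i : Fin s) (k : Fin (ℓ i - 1 + 1)) : Fin (ℓ i) :=
  Fin.cast (lc hℓ i) k

/-- cast `Fin (ℓ i) → Fin (ℓ i - 1 + 1)` -/
def ecast' (hℓ : ∀ i, 0 < ℓ i) (i : Fin s) (b : Fin (ℓ i)) : Fin (ℓ i - 1 + 1) :=
  Fin.cast (lc hℓ i).symm b

@[simp] lemma ecast_ecast' (hℓ : ∀ i, 0 < ℓ i) (i : Fin s) (b : Fin (ℓ i)) :
    ecast hℓ i (ecast' hℓ i b) = b := rfl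

@[simp] lemma ecast'_ecast (hℓ : ∀ i, 0 < ℓ i) (i : Fin s) (k : Fin (ℓ i - 1 + 1)) :
    ecast' hℓ i (ecast hℓ i k) = k := rfl

lemma ecast'_eq_iff (hℓ : ∀ i, 0 < ℓ i) (i : Fin s) (b : Fin (ℓ i))
    (k : Fin (ℓ i - 1 + 1)) : ecast' hℓ i b = k ↔ b = ecast hℓ i k := by
  constructor
  · intro h; rw [← h]; rfl
  · intro h; rw [h]; rfl

/-- insert an index `μ` in front of the `i`-th column -/
def ins (hℓ : ∀ i, 0 < ℓ i) (i : Fin s) (μ : Fin D) (u : Fin (ℓ i - 1) → Fin D) :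
    Fin (ℓ i) → Fin D :=
  fun b => (Fin.cons μ u : Fin (ℓ i - 1 + 1) → Fin D) (ecast' hℓ i b)

/-- remove the index in slot `k` of the `i`-th column -/
def del (hℓ : ∀ i, 0 < ℓ i) (i : Fin s) (k : Fin (ℓ i - 1 + 1)) (c : Fin (ℓ i) → Fin D) :
    Fin (ℓ i - 1) → Fin D :=
  fun a => c (ecast hℓ i (Equiv.swap 0 k a.succ))

/-- candidate for `β`: contract `q` into the first slot of every column of `α` -/
def betaOf (hℓ : ∀ i, 0 < ℓ i) (q : Fin D → ℝ) (α : MF D s ℓ) :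
    MF D s (fun i => ℓ i - 1) :=
  fun u => ∑ μ : Fin s → Fin D, (∏ i, q (μ i)) * α (fun i => ins hℓ i (μ i) (u i))

lemma ins_update (hℓ : ∀ i, 0 < ℓ i) (i : Fin s) (μ x : Fin D)
    (u : Fin (ℓ i - 1) → Fin D) (a : Fin (ℓ i - 1)) :
    ins hℓ i μ (Function.update u a x)
      = Function.update (ins hℓ i μ u) (ecast hℓ i a.succ) x := by
  funext b
  rcases Fin.eq_zero_or_eq_succ (ecast' hℓ i b) with h | ⟨c, h⟩
  · have hb : b ≠ ecast hℓ i a.succ := by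
      intro hb
      rw [(ecast'_eq_iff hℓ i b a.succ).mpr hb] at h
      exact (Fin.succ_ne_zero a) h
    rw [Function.update_of_ne hb]
    simp only [ins, h, Fin.cons_zero]
  · by_cases hb : b = ecast hℓ i a.succ
    · subst hb
      rw [Function.update_self]
      simp only [ins, ecast'_ecast, Fin.cons_succ, Function.update_self]
    · rw [Function.update_of_ne hb]
      have hca : c ≠ a := by
        intro hca
        apply hb
        rw [← (ecast'_eq_iff hℓ i b a.succ), h, hca]
      simp only [ins, h, Fin.cons_succ]
      rw [Function.update_of_ne hca]

lemma arg_update (hℓ : ∀ i, 0 < ℓ i) (i : Fin s) (μ : Fin s → Fin D)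
    (u : (j : Fin s) → Fin (ℓ j - 1) → Fin D) (w : Fin (ℓ i - 1) → Fin D) :
    (fun j => ins hℓ j (μ j) (Function.update u i w j))
      = Function.update (fun j => ins hℓ j (μ j) (u j)) i (ins hℓ i (μ i) w) := by
  funext j
  by_cases hj : j = i
  · subst hj; rw [Function.update_self, Function.update_self]
  · rw [Function.update_of_ne hj, Function.update_of_ne hj]

end Combinatorics


section CoreLemmas

variable {D s : ℕ} {ℓ : Fin s → ℕ}

lemma contract_any (hℓ : ∀ i, 0 < ℓ i) {p : Fin D → ℝ} {α : MF D s ℓ}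
    (hcol : ColAntisym ℓ α) (hc : ContractZero ℓ hℓ p α)
    (i : Fin s) (a : Fin (ℓ i)) (v : (j : Fin s) → Fin (ℓ j) → Fin D) :
    ∑ μ : Fin D, p μ * α (Function.update v i (Function.update (v i) a μ)) = 0 := by
  classical
  set z0 : Fin (ℓ i) := ⟨0, hℓ i⟩ with hz0
  set σ : Equiv.Perm (Fin (ℓ i)) := Equiv.swap z0 a with hσ
  set u : Fin (ℓ i) → Fin D := fun b => v i (σ b) with hu
  have key : ∀ μ : Fin D,
      α (Function.update v i (Function.update (v i) a μ))
        = ((Equiv.Perm.sign σ : ℤ) : ℝ)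
          * α (Function.update (Function.update v i u) i
              (Function.update (Function.update v i u i) z0 μ)) := by
    intro μ
    have h1 := hcol i σ (Function.update v i (Function.update u z0 μ))
    simp only [Function.update_self] at h1
    have e2 : (fun b => Function.update u z0 μ (σ b)) = Function.update (v i) a μ := by
      funext b
      by_cases hb : b = a
      · subst hb
        rw [show σ b = z0 from Equiv.swap_apply_right z0 b, Function.update_self,
          Function.update_self]
      · have hσb : σ b ≠ z0 := by
          intro h
          apply hb
          have : σ (σ b) = σ z0 := by rw [h]
          rw [Equiv.swap_apply_self, Equiv.swap_apply_left] at this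
          exact this
        rw [Function.update_of_ne hσb, Function.update_of_ne hb, hu]
        show v i (σ (σ b)) = v i b
        rw [Equiv.swap_apply_self]
    rw [e2, Function.update_idem] at h1
    rw [h1]
    congr 1
    simp only [Function.update_self, Function.update_idem]
  rw [Finset.sum_congr rfl (fun μ _ => by rw [key μ])]
  have : ∀ μ : Fin D, p μ * (((Equiv.Perm.sign σ : ℤ) : ℝ)
      * α (Function.update (Function.update v i u) i
          (Function.update (Function.update v i u i) z0 μ)))
      = ((Equiv.Perm.sign σ : ℤ) : ℝ) * (p μ *
        α (Function.update (Function.update v i u) i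
          (Function.update (Function.update v i u i) z0 μ))) := fun μ => by ring
  rw [Finset.sum_congr rfl (fun μ _ => this μ), ← Finset.mul_sum]
  rw [hc i (Function.update v i u), mul_zero]

lemma update_eq_sgn (hℓ : ∀ i, 0 < ℓ i) {α : MF D s ℓ}
    (hcol : ColAntisym ℓ α) (i : Fin s) (k : Fin (ℓ i - 1 + 1)) (x : Fin D)
    (v : (j : Fin s) → Fin (ℓ j) → Fin D) :
    α (Function.update v i (Function.update (v i) (ecast hℓ i k) x))
      = sgnk k * α (Function.update v i (ins hℓ i x (del hℓ i k (v i)))) := by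
  classical
  set π : Equiv.Perm (Fin (ℓ i)) := (finCongr (lc hℓ i)).permCongr (Equiv.swap 0 k) with hπdef
  have hπ : ∀ b : Fin (ℓ i), ecast' hℓ i (π b) = Equiv.swap 0 k (ecast' hℓ i b) := by
    intro b; rfl
  have h1 := hcol i π (Function.update v i (ins hℓ i x (del hℓ i k (v i))))
  simp only [Function.update_self] at h1
  have e2 : (fun b => ins hℓ i x (del hℓ i k (v i)) (π b))
      = Function.update (v i) (ecast hℓ i k) x := by
    funext b
    show (Fin.cons x (del hℓ i k (v i)) : Fin (ℓ i - 1 + 1) → Fin D) (ecast' hℓ i (π b)) = _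
    rw [hπ b]
    rcases Fin.eq_zero_or_eq_succ (Equiv.swap 0 k (ecast' hℓ i b)) with h | ⟨c, h⟩
    · have hbk : ecast' hℓ i b = k := by
        have : Equiv.swap 0 k (Equiv.swap 0 k (ecast' hℓ i b)) = Equiv.swap 0 k 0 := by rw [h]
        rw [Equiv.swap_apply_self, Equiv.swap_apply_left] at this
        exact this
      have hb : b = ecast hℓ i k := (ecast'_eq_iff hℓ i b k).mp hbk
      rw [h, Fin.cons_zero, hb, Function.update_self]
    · have hbk : b ≠ ecast hℓ i k := by
        intro hb
        rw [(ecast'_eq_iff hℓ i b k).mpr hb, Equiv.swap_apply_right] at h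
        exact (Fin.succ_ne_zero c) h.symm
      rw [h, Fin.cons_succ, Function.update_of_ne hbk]
      show v i (ecast hℓ i (Equiv.swap 0 k c.succ)) = v i b
      rw [← h, Equiv.swap_apply_self]
      rfl
  rw [e2, Function.update_idem] at h1
  have hsgn : ((Equiv.Perm.sign π : ℤ) : ℝ) = sgnk k := by
    rw [hπdef, Equiv.Perm.sign_permCongr]
    unfold sgnk
    by_cases hk : k = 0
    · subst hk; rw [Equiv.swap_self]
      simp
    · rw [Equiv.Perm.sign_swap (fun h => hk h.symm), if_neg hk]
      simp
  rw [hsgn] at h1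
  exact h1

lemma wzero' (hℓ : ∀ i, 0 < ℓ i) {p : Fin D → ℝ} {α : MF D s ℓ}
    (hcol : ColAntisym ℓ α) (hw : WedgeZero ℓ p α) (i : Fin s)
    (v : (j : Fin s) → Fin (ℓ j) → Fin D) (ρ : Fin D) :
    ∑ k : Fin (ℓ i + 1),
      sgnk k * plow D p ((Fin.cons ρ (v i) : Fin (ℓ i + 1) → Fin D) k) *
        α (Function.update v i
          (fun a => (Fin.cons ρ (v i) : Fin (ℓ i + 1) → Fin D) (Equiv.swap 0 k a.succ))) = 0 := by
  classical
  have h0 := hw i v ρ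
  have h1 : ∑ x : Fin (ℓ i + 1) × Equiv.Perm (Fin (ℓ i)),
      (fun σ : Equiv.Perm (Fin (ℓ i + 1)) =>
        ((Equiv.Perm.sign σ : ℤ) : ℝ) *
          plow D p ((Fin.cons ρ (v i) : Fin (ℓ i + 1) → Fin D) (σ 0)) *
          α (Function.update v i
            (fun a => (Fin.cons ρ (v i) : Fin (ℓ i + 1) → Fin D) (σ a.succ))))
        (Equiv.Perm.decomposeFin.symm x) = 0 := by
    exact (Equiv.sum_comp Equiv.Perm.decomposeFin.symm _).trans h0
  rw [Fintype.sum_prod_type] at h1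
  have hterm : ∀ (k : Fin (ℓ i + 1)) (τ : Equiv.Perm (Fin (ℓ i))),
      ((Equiv.Perm.sign (Equiv.Perm.decomposeFin.symm (k, τ)) : ℤ) : ℝ) *
        plow D p ((Fin.cons ρ (v i) : Fin (ℓ i + 1) → Fin D)
          ((Equiv.Perm.decomposeFin.symm (k, τ)) 0)) *
        α (Function.update v i
          (fun a => (Fin.cons ρ (v i) : Fin (ℓ i + 1) → Fin D)
            ((Equiv.Perm.decomposeFin.symm (k, τ)) a.succ)))
      = sgnk k * plow D p ((Fin.cons ρ (v i) : Fin (ℓ i + 1) → Fin D) k) *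
          α (Function.update v i
            (fun a => (Fin.cons ρ (v i) : Fin (ℓ i + 1) → Fin D) (Equiv.swap 0 k a.succ))) := by
    intro k τ
    have hsgn : ((Equiv.Perm.sign (Equiv.Perm.decomposeFin.symm (k, τ)) : ℤ) : ℝ)
        = sgnk k * ((Equiv.Perm.sign τ : ℤ) : ℝ) := by
      rw [Equiv.Perm.decomposeFin.symm_sign]
      unfold sgnk
      by_cases hk : k = 0 <;> simp [hk]
    have hz : (Equiv.Perm.decomposeFin.symm (k, τ)) 0 = k :=
      Equiv.Perm.decomposeFin_symm_apply_zero k τ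
    have hsucc : (fun a => (Fin.cons ρ (v i) : Fin (ℓ i + 1) → Fin D)
          ((Equiv.Perm.decomposeFin.symm (k, τ)) a.succ))
        = fun a => (Fin.cons ρ (v i) : Fin (ℓ i + 1) → Fin D)
            (Equiv.swap 0 k (τ a).succ) := by
      funext a; rw [Equiv.Perm.decomposeFin_symm_apply_succ]
    rw [hsgn, hz, hsucc]
    have h2 := hcol i τ (Function.update v i
      (fun a => (Fin.cons ρ (v i) : Fin (ℓ i + 1) → Fin D) (Equiv.swap 0 k a.succ)))
    simp only [Function.update_self] at h2
    rw [Function.update_idem] at h2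
    rw [h2]
    have hττ : ((Equiv.Perm.sign τ : ℤ) : ℝ) * ((Equiv.Perm.sign τ : ℤ) : ℝ) = 1 := by
      rcases Int.units_eq_one_or (Equiv.Perm.sign τ) with h | h <;> rw [h] <;> norm_num
    have : ∀ A B C : ℝ, sgnk k * A * B * (A * C)
        = (A * A) * (sgnk k * B * C) := fun A B C => by ring
    rw [this, hττ, one_mul]
  rw [Finset.sum_congr rfl (fun k _ => Finset.sum_congr rfl (fun τ _ => hterm k τ))] at h1
  simp only [Finset.sum_const, Finset.card_univ, Fintype.card_perm, Fintype.card_fin,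
    nsmul_eq_mul] at h1
  rw [← Finset.mul_sum] at h1
  have hfac : ((Nat.factorial (ℓ i) : ℝ)) ≠ 0 :=
    Nat.cast_ne_zero.mpr (Nat.factorial_ne_zero _)
  exact (mul_eq_zero.mp h1).resolve_left hfac

end CoreLemmas


section CoreLemmas2

variable {D s : ℕ} {ℓ : Fin s → ℕ}

lemma main_one (hℓ : ∀ i, 0 < ℓ i) {p q : Fin D → ℝ} {α : MF D s ℓ}
    (hcol : ColAntisym ℓ α) (hw : WedgeZero ℓ p α) (hq : bil D q p = 1)
    (i : Fin s) (v : (j : Fin s) → Fin (ℓ j) → Fin D) :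
    α v = ∑ j : Fin (ℓ i), plow D p (v i j) *
      ∑ ρ : Fin D, q ρ * α (Function.update v i (Function.update (v i) j ρ)) := by
  classical
  have h0 : ∑ k : Fin (ℓ i + 1), ∑ ρ : Fin D,
      q ρ * (sgnk k * plow D p ((Fin.cons ρ (v i) : Fin (ℓ i + 1) → Fin D) k) *
        α (Function.update v i
          (fun a => (Fin.cons ρ (v i) : Fin (ℓ i + 1) → Fin D) (Equiv.swap 0 k a.succ)))) = 0 := by
    rw [Finset.sum_comm]
    refine Finset.sum_eq_zero fun ρ _ => ?_
    rw [← Finset.mul_sum, wzero' hℓ hcol hw i v ρ, mul_zero]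
  rw [Fin.sum_univ_succ] at h0
  have hz : ∑ ρ : Fin D,
      q ρ * (sgnk (0 : Fin (ℓ i + 1)) *
        plow D p ((Fin.cons ρ (v i) : Fin (ℓ i + 1) → Fin D) 0) *
        α (Function.update v i
          (fun a => (Fin.cons ρ (v i) : Fin (ℓ i + 1) → Fin D)
            (Equiv.swap 0 (0 : Fin (ℓ i + 1)) a.succ)))) = α v := by
    have e1 : ∀ ρ : Fin D,
        (fun a => (Fin.cons ρ (v i) : Fin (ℓ i + 1) → Fin D)
          (Equiv.swap (0 : Fin (ℓ i + 1)) 0 a.succ)) = v i := by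
      intro ρ; funext a
      rw [Equiv.swap_self]
      show (Fin.cons ρ (v i) : Fin (ℓ i + 1) → Fin D) a.succ = v i a
      rw [Fin.cons_succ]
    have e2 : ∀ ρ : Fin D,
        q ρ * (sgnk (0 : Fin (ℓ i + 1)) *
          plow D p ((Fin.cons ρ (v i) : Fin (ℓ i + 1) → Fin D) 0) *
          α (Function.update v i
            (fun a => (Fin.cons ρ (v i) : Fin (ℓ i + 1) → Fin D)
              (Equiv.swap 0 (0 : Fin (ℓ i + 1)) a.succ))))
        = q ρ * plow D p ρ * α v := by
      intro ρ
      rw [e1 ρ, Function.update_eq_self, Fin.cons_zero]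
      unfold sgnk
      rw [if_pos rfl]
      ring
    rw [Finset.sum_congr rfl (fun ρ _ => e2 ρ)]
    have : ∀ ρ : Fin D, q ρ * plow D p ρ * α v = q ρ * plow D p ρ * α v := fun _ => rfl
    rw [show (∑ ρ : Fin D, q ρ * plow D p ρ * α v) = (∑ ρ : Fin D, q ρ * plow D p ρ) * α v by
      rw [Finset.sum_mul], sum_q_plow, hq, one_mul]
  have hsucc : ∀ j : Fin (ℓ i),
      (∑ ρ : Fin D, q ρ * (sgnk (j.succ) *
        plow D p ((Fin.cons ρ (v i) : Fin (ℓ i + 1) → Fin D) j.succ) *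
        α (Function.update v i
          (fun a => (Fin.cons ρ (v i) : Fin (ℓ i + 1) → Fin D) (Equiv.swap 0 j.succ a.succ)))))
      = -(plow D p (v i j) *
          ∑ ρ : Fin D, q ρ * α (Function.update v i (Function.update (v i) j ρ))) := by
    intro j
    have e2 : ∀ ρ : Fin D,
        (fun a => (Fin.cons ρ (v i) : Fin (ℓ i + 1) → Fin D) (Equiv.swap 0 j.succ a.succ))
          = Function.update (v i) j ρ := by
      intro ρ; funext a
      by_cases ha : a = j
      · subst ha
        rw [Equiv.swap_apply_right]
        show (Fin.cons ρ (v i) : Fin (ℓ i + 1) → Fin D) 0 = _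
        rw [Fin.cons_zero, Function.update_self]
      · rw [Equiv.swap_apply_of_ne_of_ne (Fin.succ_ne_zero a)
          (fun h => ha (Fin.succ_injective _ h))]
        show (Fin.cons ρ (v i) : Fin (ℓ i + 1) → Fin D) a.succ = _
        rw [Fin.cons_succ, Function.update_of_ne ha]
    have e3 : ∀ ρ : Fin D,
        q ρ * (sgnk (j.succ) *
          plow D p ((Fin.cons ρ (v i) : Fin (ℓ i + 1) → Fin D) j.succ) *
          α (Function.update v i
            (fun a => (Fin.cons ρ (v i) : Fin (ℓ i + 1) → Fin D)
              (Equiv.swap 0 j.succ a.succ))))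
        = -(plow D p (v i j) *
            (q ρ * α (Function.update v i (Function.update (v i) j ρ)))) := by
      intro ρ
      rw [e2 ρ]
      show q ρ * (sgnk (j.succ) *
          plow D p ((Fin.cons ρ (v i) : Fin (ℓ i + 1) → Fin D) j.succ) * _) = _
      rw [Fin.cons_succ]
      unfold sgnk
      rw [if_neg (Fin.succ_ne_zero j)]
      ring
    rw [Finset.sum_congr rfl (fun ρ _ => e3 ρ), Finset.sum_neg_distrib, ← Finset.mul_sum]
  rw [hz, Finset.sum_congr rfl (fun j _ => hsucc j), Finset.sum_neg_distrib] at h0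
  linarith

lemma main_one' (hℓ : ∀ i, 0 < ℓ i) {p q : Fin D → ℝ} {α : MF D s ℓ}
    (hcol : ColAntisym ℓ α) (hw : WedgeZero ℓ p α) (hq : bil D q p = 1)
    (i : Fin s) (v : (j : Fin s) → Fin (ℓ j) → Fin D) :
    α v = ∑ k : Fin (ℓ i - 1 + 1), ∑ x : Fin D,
      sgnk k * plow D p (v i (ecast hℓ i k)) * q x *
        α (Function.update v i (ins hℓ i x (del hℓ i k (v i)))) := by
  have h := main_one hℓ hcol hw hq i v
  have hre : ∑ j : Fin (ℓ i), plow D p (v i j) *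
      ∑ ρ : Fin D, q ρ * α (Function.update v i (Function.update (v i) j ρ))
      = ∑ k : Fin (ℓ i - 1 + 1), plow D p (v i (ecast hℓ i k)) *
        ∑ ρ : Fin D, q ρ * α (Function.update v i (Function.update (v i) (ecast hℓ i k) ρ)) := by
    exact (Equiv.sum_comp (finCongr (lc hℓ i))
      (fun j => plow D p (v i j) *
        ∑ ρ : Fin D, q ρ * α (Function.update v i (Function.update (v i) j ρ)))).symm
  rw [hre] at h
  rw [h]
  refine Finset.sum_congr rfl fun k _ => ?_
  rw [Finset.mul_sum]
  refine Finset.sum_congr rfl fun x _ => ?_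
  rw [update_eq_sgn hℓ hcol i k x v]
  ring

end CoreLemmas2


section BetaLemmas

variable {D s : ℕ} {ℓ : Fin s → ℕ}

lemma multi_antisym {m : Fin s → ℕ} {γ : MF D s m} (hγ : ColAntisym m γ)
    (τ : ∀ i, Equiv.Perm (Fin (m i))) (u : (j : Fin s) → Fin (m j) → Fin D) :
    γ (fun i => fun a => u i (τ i a))
      = (∏ i, ((Equiv.Perm.sign (τ i) : ℤ) : ℝ)) * γ u := by
  classical
  have key : ∀ T : Finset (Fin s),
      γ (fun i => if i ∈ T then (fun a => u i (τ i a)) else u i)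
        = (∏ i ∈ T, ((Equiv.Perm.sign (τ i) : ℤ) : ℝ)) * γ u := by
    intro T
    induction T using Finset.induction_on with
    | empty => simp
    | @insert j T hj ih =>
      have harg : (fun i => if i ∈ insert j T then (fun a => u i (τ i a)) else u i)
          = Function.update (fun i => if i ∈ T then (fun a => u i (τ i a)) else u i) j
              (fun a => (fun i => if i ∈ T then (fun a => u i (τ i a)) else u i) j (τ j a)) := by
        funext i
        by_cases hij : i = j
        · subst hij
          rw [Function.update_self, if_pos (Finset.mem_insert_self i T)]
          simp [hj]
        · rw [Function.update_of_ne hij]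
          simp only [Finset.mem_insert, hij, false_or]
      rw [harg, hγ j (τ j) _, ih, Finset.prod_insert hj]
      ring
  have h := key Finset.univ
  simpa using h

lemma betaOf_antisym (hℓ : ∀ i, 0 < ℓ i) {q : Fin D → ℝ} {α : MF D s ℓ}
    (hcol : ColAntisym ℓ α) :
    ColAntisym (fun i => ℓ i - 1) (betaOf hℓ q α) := by
  intro i τ u
  unfold betaOf
  rw [Finset.mul_sum]
  refine Finset.sum_congr rfl fun μ _ => ?_
  have harg : (fun j => ins hℓ j (μ j) (Function.update u i (fun a => u i (τ a)) j))
      = Function.update (fun j => ins hℓ j (μ j) (u j)) i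
          (ins hℓ i (μ i) (fun a => u i (τ a))) :=
    arg_update hℓ i μ u _
  set π : Equiv.Perm (Fin (ℓ i)) :=
    (finCongr (lc hℓ i)).permCongr (Equiv.Perm.decomposeFin.symm (0, τ)) with hπdef
  have hins : ins hℓ i (μ i) (fun a => u i (τ a))
      = fun b => ins hℓ i (μ i) (u i) (π b) := by
    funext b
    have hπ : ecast' hℓ i (π b)
        = Equiv.Perm.decomposeFin.symm (0, τ) (ecast' hℓ i b) := rfl
    show (Fin.cons (μ i) (fun a => u i (τ a)) : Fin (ℓ i - 1 + 1) → Fin D) (ecast' hℓ i b)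
      = (Fin.cons (μ i) (u i) : Fin (ℓ i - 1 + 1) → Fin D) (ecast' hℓ i (π b))
    rw [hπ]
    rcases Fin.eq_zero_or_eq_succ (ecast' hℓ i b) with h | ⟨c, h⟩
    · rw [h, Equiv.Perm.decomposeFin_symm_apply_zero, Fin.cons_zero, Fin.cons_zero]
    · rw [h, Equiv.Perm.decomposeFin_symm_apply_succ, Equiv.swap_self]
      show _ = (Fin.cons (μ i) (u i) : Fin (ℓ i - 1 + 1) → Fin D) ((τ c).succ)
      rw [Fin.cons_succ, Fin.cons_succ]
  have h1 := hcol i π (Function.update (fun j => ins hℓ j (μ j) (u j)) i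
      (ins hℓ i (μ i) (u i)))
  simp only [Function.update_self] at h1
  rw [Function.update_idem] at h1
  have hb : Function.update (fun j => ins hℓ j (μ j) (u j)) i
      (fun b => ins hℓ i (μ i) (u i) (π b))
      = fun j => ins hℓ j (μ j) (Function.update u i (fun a => u i (τ a)) j) := by
    rw [harg, hins]
  rw [hb] at h1
  have hupd : Function.update (fun j => ins hℓ j (μ j) (u j)) i (ins hℓ i (μ i) (u i))
      = fun j => ins hℓ j (μ j) (u j) := Function.update_eq_self _ _
  rw [hupd] at h1
  rw [h1]
  have hsgn : ((Equiv.Perm.sign π : ℤ) : ℝ) = ((Equiv.Perm.sign τ : ℤ) : ℝ) := by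
    rw [hπdef, Equiv.Perm.sign_permCongr, Equiv.Perm.decomposeFin.symm_sign, if_pos rfl,
      one_mul]
  rw [hsgn]
  ring

lemma betaOf_transverse_p (hℓ : ∀ i, 0 < ℓ i) {p q : Fin D → ℝ} {α : MF D s ℓ}
    (hcol : ColAntisym ℓ α) (hc : ContractZero ℓ hℓ p α) :
    SlotTransverse (fun i => ℓ i - 1) p (betaOf hℓ q α) := by
  intro i a u
  unfold betaOf
  simp only [Finset.mul_sum]
  rw [Finset.sum_comm]
  refine Finset.sum_eq_zero fun μ _ => ?_
  have harg : ∀ ρ : Fin D,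
      (fun j => ins hℓ j (μ j) (Function.update u i (Function.update (u i) a ρ) j))
        = Function.update (fun j => ins hℓ j (μ j) (u j)) i
            (Function.update (ins hℓ i (μ i) (u i)) (ecast hℓ i a.succ) ρ) := by
    intro ρ
    rw [arg_update hℓ i μ u _, ins_update hℓ i (μ i) ρ (u i) a]
  have e1 : ∀ ρ : Fin D,
      p ρ * ((∏ j, q (μ j)) *
        α (fun j => ins hℓ j (μ j) (Function.update u i (Function.update (u i) a ρ) j)))
      = (∏ j, q (μ j)) * (p ρ *
        α (Function.update (fun j => ins hℓ j (μ j) (u j)) i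
          (Function.update ((fun j => ins hℓ j (μ j) (u j)) i) (ecast hℓ i a.succ) ρ))) := by
    intro ρ
    rw [harg ρ]
    ring
  rw [Finset.sum_congr rfl (fun ρ _ => e1 ρ), ← Finset.mul_sum,
    contract_any hℓ hcol hc i (ecast hℓ i a.succ) (fun j => ins hℓ j (μ j) (u j)), mul_zero]

end BetaLemmas


section BetaLemmas2

variable {D s : ℕ} {ℓ : Fin s → ℕ}

lemma betaOf_transverse_q (hℓ : ∀ i, 0 < ℓ i) {q : Fin D → ℝ} {α : MF D s ℓ}
    (hcol : ColAntisym ℓ α) :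
    SlotTransverse (fun i => ℓ i - 1) q (betaOf hℓ q α) := by
  classical
  intro i a u
  set sl : Fin (ℓ i) := ecast hℓ i a.succ with hsl
  set z0 : Fin (ℓ i) := ecast hℓ i 0 with hz0
  have hz0sl : z0 ≠ sl := by
    intro h
    have h2 := congrArg (ecast' hℓ i) h
    rw [hz0, hsl, ecast'_ecast, ecast'_ecast] at h2
    exact (Fin.succ_ne_zero a) h2.symm
  set BASE : (Fin s → Fin D) → ((j : Fin s) → Fin (ℓ j) → Fin D) :=
    fun μ => fun j => ins hℓ j (μ j) (u j) with hBASE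
  set F : Fin D × (Fin s → Fin D) → ℝ := fun x =>
    q x.1 * ((∏ j, q (x.2 j)) *
      α (fun j => ins hℓ j (x.2 j)
        (Function.update u i (Function.update (u i) a x.1) j))) with hF
  have harg : ∀ (ρ : Fin D) (μ : Fin s → Fin D),
      (fun j => ins hℓ j (μ j) (Function.update u i (Function.update (u i) a ρ) j))
        = Function.update (BASE μ) i
            (Function.update (ins hℓ i (μ i) (u i)) sl ρ) := by
    intro ρ μ
    rw [arg_update hℓ i μ u _, ins_update hℓ i (μ i) ρ (u i) a]
  have hinv : Function.Involutive
      (fun x : Fin D × (Fin s → Fin D) => (x.2 i, Function.update x.2 i x.1)) := by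
    intro ⟨ρ, μ⟩
    simp only [Function.update_self, Function.update_idem, Function.update_eq_self]
  set e := Function.Involutive.toPerm _ hinv with hedef
  have hkey : ∀ x : Fin D × (Fin s → Fin D), F (e x) = -F x := by
    rintro ⟨ρ, μ⟩
    have he : e (ρ, μ) = (μ i, Function.update μ i ρ) := rfl
    rw [he, hF]
    simp only
    rw [harg ρ μ, harg (μ i) (Function.update μ i ρ)]
    -- identify the α-arguments
    have hBASE2 : BASE (Function.update μ i ρ)
        = Function.update (BASE μ) i (ins hℓ i ρ (u i)) := by
      funext j
      by_cases hj : j = i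
      · subst hj; rw [Function.update_self, hBASE]
        simp only [Function.update_self]
      · rw [Function.update_of_ne hj, hBASE]
        simp only [Function.update_of_ne hj]
    have hupds : Function.update μ i ρ i = ρ := Function.update_self ..
    rw [hBASE2, hupds, Function.update_idem]
    -- antisymmetry under the swap of slots z0 and sl
    set σ : Equiv.Perm (Fin (ℓ i)) := Equiv.swap z0 sl with hσ
    have h1 := hcol i σ (Function.update (BASE μ) i
      (Function.update (ins hℓ i (μ i) (u i)) sl ρ))
    simp only [Function.update_self] at h1
    rw [Function.update_idem] at h1
    have e2 : (fun b => Function.update (ins hℓ i (μ i) (u i)) sl ρ (σ b))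
        = Function.update (ins hℓ i ρ (u i)) sl (μ i) := by
      funext b
      by_cases hb0 : b = z0
      · subst hb0
        rw [show σ z0 = sl from Equiv.swap_apply_left z0 sl, Function.update_self,
          Function.update_of_ne hz0sl]
        show ρ = (Fin.cons ρ (u i) : Fin (ℓ i - 1 + 1) → Fin D) (ecast' hℓ i z0)
        rw [hz0, ecast'_ecast, Fin.cons_zero]
      · by_cases hbsl : b = sl
        · subst hbsl
          rw [show σ sl = z0 from Equiv.swap_apply_right z0 sl, Function.update_self,
            Function.update_of_ne hz0sl]
          show (Fin.cons (μ i) (u i) : Fin (ℓ i - 1 + 1) → Fin D) (ecast' hℓ i z0) = μ i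
          rw [hz0, ecast'_ecast, Fin.cons_zero]
        · rw [show σ b = b from Equiv.swap_apply_of_ne_of_ne hb0 hbsl,
            Function.update_of_ne hbsl, Function.update_of_ne hbsl]
          rcases Fin.eq_zero_or_eq_succ (ecast' hℓ i b) with h | ⟨c, h⟩
          · exact absurd ((ecast'_eq_iff hℓ i b 0).mp h) hb0
          · show (Fin.cons (μ i) (u i) : Fin (ℓ i - 1 + 1) → Fin D) (ecast' hℓ i b)
              = (Fin.cons ρ (u i) : Fin (ℓ i - 1 + 1) → Fin D) (ecast' hℓ i b)
            rw [h, Fin.cons_succ, Fin.cons_succ]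
    rw [e2] at h1
    have hsgnσ : ((Equiv.Perm.sign σ : ℤ) : ℝ) = -1 := by
      rw [hσ, Equiv.Perm.sign_swap hz0sl]
      simp
    rw [hsgnσ] at h1
    rw [h1]
    -- now the product bookkeeping
    have hprod1 : (∏ j, q (Function.update μ i ρ j))
        = q ρ * ∏ j ∈ Finset.univ.erase i, q (μ j) := by
      rw [← Finset.mul_prod_erase Finset.univ _ (Finset.mem_univ i), Function.update_self]
      congr 1
      refine Finset.prod_congr rfl fun j hj => ?_
      rw [Function.update_of_ne (Finset.mem_erase.mp hj).1]
    have hprod2 : (∏ j, q (μ j)) = q (μ i) * ∏ j ∈ Finset.univ.erase i, q (μ j) := by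
      rw [← Finset.mul_prod_erase Finset.univ _ (Finset.mem_univ i)]
    rw [hprod1, hprod2]
    ring
  have hsum := Equiv.sum_comp e F
  rw [Finset.sum_congr rfl (fun x _ => hkey x), Finset.sum_neg_distrib] at hsum
  have hS : ∑ x : Fin D × (Fin s → Fin D), F x = 0 := by linarith [hsum]
  rw [Fintype.sum_prod_type] at hS
  unfold betaOf
  simp only [Finset.mul_sum]
  exact hS

lemma sum_update_eq {ι : Type*} [Fintype ι] [DecidableEq ι] {κ : ι → Type*}
    [∀ i, Fintype (κ i)] (j : ι) (g : (∀ i, κ i) → ℝ) :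
    ∑ k : ∀ i, κ i, ∑ x : κ j, g (Function.update k j x)
      = (Fintype.card (κ j) : ℝ) * ∑ k : ∀ i, κ i, g k := by
  classical
  have hinv : Function.Involutive
      (fun kx : (∀ i, κ i) × κ j => (Function.update kx.1 j kx.2, kx.1 j)) := by
    rintro ⟨k, x⟩
    simp only [Function.update_self, Function.update_idem, Function.update_eq_self]
  have h1 := Equiv.sum_comp (Function.Involutive.toPerm _ hinv) (fun kx : (∀ i, κ i) × κ j => g kx.1)
  have h2 : ∀ kx : (∀ i, κ i) × κ j,
      (fun kx : (∀ i, κ i) × κ j => g kx.1) ((Function.Involutive.toPerm _ hinv) kx)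
        = g (Function.update kx.1 j kx.2) := fun kx => rfl
  rw [Finset.sum_congr rfl (fun kx _ => h2 kx)] at h1
  rw [Fintype.sum_prod_type] at h1
  rw [h1, Fintype.sum_prod_type]
  simp only [Finset.sum_const, Finset.card_univ, nsmul_eq_mul]
  rw [← Finset.mul_sum]

lemma sum_pi_prod {ι : Type*} [Fintype ι] [DecidableEq ι] {B C : ι → Type*}
    [∀ i, Fintype (B i)] [∀ i, Fintype (C i)] (g : (∀ i, B i) → ℝ) :
    ∑ ρ : ∀ i, B i × C i, g (fun i => (ρ i).1)
      = (∏ i, (Fintype.card (C i) : ℝ)) * ∑ k : ∀ i, B i, g k := by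
  classical
  let e : ((∀ i, B i) × (∀ i, C i)) ≃ (∀ i, B i × C i) :=
    { toFun := fun kc => fun i => (kc.1 i, kc.2 i)
      invFun := fun ρ => (fun i => (ρ i).1, fun i => (ρ i).2)
      left_inv := fun kc => rfl
      right_inv := fun ρ => rfl }
  have h1 := Equiv.sum_comp e (fun ρ : ∀ i, B i × C i => g (fun i => (ρ i).1))
  have h2 : ∀ kc : (∀ i, B i) × (∀ i, C i),
      (fun ρ : ∀ i, B i × C i => g (fun i => (ρ i).1)) (e kc) = g kc.1 := fun kc => rfl
  rw [Finset.sum_congr rfl (fun kc _ => h2 kc)] at h1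
  rw [← h1, Fintype.sum_prod_type]
  simp only [Finset.sum_const, Finset.card_univ, nsmul_eq_mul, Fintype.card_pi]
  rw [← Finset.mul_sum, Nat.cast_prod]

end BetaLemmas2


section WedgeReduction

variable {D s : ℕ} {ℓ : Fin s → ℕ}

lemma wedgeAll_eq (hℓ : ∀ i, 0 < ℓ i) {p : Fin D → ℝ} {γ : MF D s (fun i => ℓ i - 1)}
    (hγ : ColAntisym (fun i => ℓ i - 1) γ) (v : (j : Fin s) → Fin (ℓ j) → Fin D) :
    wedgeAll ℓ hℓ p γ v
      = ∑ k : ∀ i, Fin (ℓ i - 1 + 1),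
          (∏ i, sgnk (k i)) * (∏ i, plow D p (v i (ecast hℓ i (k i)))) *
            γ (fun i => del hℓ i (k i) (v i)) := by
  classical
  unfold wedgeAll
  set W : (∀ i, Fin (ℓ i - 1 + 1) × Equiv.Perm (Fin (ℓ i - 1)))
      ≃ (∀ i, Equiv.Perm (Fin (ℓ i))) :=
    Equiv.piCongrRight (fun i =>
      Equiv.Perm.decomposeFin.symm.trans (Equiv.permCongr (finCongr (lc hℓ i)))) with hW
  have hcomp := Equiv.sum_comp W
    (fun σ : ∀ i, Equiv.Perm (Fin (ℓ i)) =>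
      (∏ i, ((Equiv.Perm.sign (σ i) : ℤ) : ℝ)) *
      (∏ i, plow D p (v i (σ i ⟨0, hℓ i⟩))) *
      γ (fun i a => v i (σ i ⟨(a : ℕ) + 1, by
        have h : (a : ℕ) < ℓ i - 1 := a.isLt
        omega⟩)))
  rw [← hcomp]
  have hterm : ∀ ρ : ∀ i, Fin (ℓ i - 1 + 1) × Equiv.Perm (Fin (ℓ i - 1)),
      (∏ i, ((Equiv.Perm.sign ((W ρ) i) : ℤ) : ℝ)) *
      (∏ i, plow D p (v i ((W ρ) i ⟨0, hℓ i⟩))) *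
      γ (fun i a => v i ((W ρ) i ⟨(a : ℕ) + 1, by
        have h : (a : ℕ) < ℓ i - 1 := a.isLt
        omega⟩))
      = (∏ i, sgnk ((ρ i).1)) * (∏ i, plow D p (v i (ecast hℓ i ((ρ i).1)))) *
          γ (fun i => del hℓ i ((ρ i).1) (v i)) := by
    intro ρ
    have happ : ∀ (i : Fin s) (b : Fin (ℓ i - 1 + 1)),
        (W ρ) i (ecast hℓ i b) = ecast hℓ i (Equiv.Perm.decomposeFin.symm (ρ i) b) := by
      intro i b; rfl
    have hzero : ∀ i : Fin s, (⟨0, hℓ i⟩ : Fin (ℓ i)) = ecast hℓ i 0 := by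
      intro i; apply Fin.ext; simp [ecast, Fin.cast]
    have hsuccb : ∀ (i : Fin s) (a : Fin (ℓ i - 1)) (h : (a : ℕ) + 1 < ℓ i),
        (⟨(a : ℕ) + 1, h⟩ : Fin (ℓ i)) = ecast hℓ i a.succ := by
      intro i a h; apply Fin.ext; simp [ecast, Fin.cast]
    have hsgn : ∀ i : Fin s, ((Equiv.Perm.sign ((W ρ) i) : ℤ) : ℝ)
        = sgnk ((ρ i).1) * ((Equiv.Perm.sign ((ρ i).2) : ℤ) : ℝ) := by
      intro i
      have : (W ρ) i = Equiv.permCongr (finCongr (lc hℓ i))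
          (Equiv.Perm.decomposeFin.symm (ρ i)) := rfl
      rw [this, Equiv.Perm.sign_permCongr]
      rcases ρ i with ⟨k, τ⟩
      rw [Equiv.Perm.decomposeFin.symm_sign]
      unfold sgnk
      by_cases hk : k = 0 <;> simp [hk]
    have hplow : ∀ i : Fin s, plow D p (v i ((W ρ) i ⟨0, hℓ i⟩))
        = plow D p (v i (ecast hℓ i ((ρ i).1))) := by
      intro i
      rw [hzero i, happ i 0]
      congr 2
      rcases ρ i with ⟨k, τ⟩
      rw [Equiv.Perm.decomposeFin_symm_apply_zero]
    have hγarg : (fun (i : Fin s) (a : Fin (ℓ i - 1)) => v i ((W ρ) i (⟨(a : ℕ) + 1, by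
          have h : (a : ℕ) < ℓ i - 1 := a.isLt
          omega⟩ : Fin (ℓ i))))
        = fun (i : Fin s) (a : Fin (ℓ i - 1)) =>
            (fun i => del hℓ i ((ρ i).1) (v i)) i ((fun i => (ρ i).2) i a) := by
      funext i a
      rw [hsuccb i a (by have h : (a : ℕ) < ℓ i - 1 := a.isLt; omega), happ i a.succ]
      show v i (ecast hℓ i (Equiv.Perm.decomposeFin.symm ((ρ i).1, (ρ i).2) a.succ)) = _
      rw [Equiv.Perm.decomposeFin_symm_apply_succ]
      rfl
    rw [Finset.prod_congr rfl (fun i _ => hsgn i),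
      Finset.prod_congr rfl (fun i _ => hplow i), hγarg,
      multi_antisym hγ (fun i => (ρ i).2) (fun i => del hℓ i ((ρ i).1) (v i)),
      Finset.prod_mul_distrib]
    have hsq : (∏ i, ((Equiv.Perm.sign ((ρ i).2) : ℤ) : ℝ))
        * (∏ i, ((Equiv.Perm.sign ((ρ i).2) : ℤ) : ℝ)) = 1 := by
      rw [← Finset.prod_mul_distrib]
      rw [Finset.prod_congr rfl (fun i _ => ?_), Finset.prod_const_one]
      rcases Int.units_eq_one_or (Equiv.Perm.sign ((ρ i).2)) with h | h <;> rw [h] <;> norm_num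
    have harr : ∀ A B C E X : ℝ, (A * B) * C * (B * X) = (B * B) * (A * C * X) :=
      fun A B C E X => by ring
    rw [harr _ _ _ 0 _, hsq, one_mul]
  rw [Finset.sum_congr rfl (fun ρ _ => hterm ρ)]
  rw [sum_pi_prod (fun k : ∀ i, Fin (ℓ i - 1 + 1) =>
    (∏ i, sgnk (k i)) * (∏ i, plow D p (v i (ecast hℓ i (k i)))) *
      γ (fun i => del hℓ i (k i) (v i)))]
  rw [← mul_assoc]
  have hcard : (∏ i : Fin s, ((ℓ i - 1).factorial : ℝ))⁻¹ *
      (∏ i : Fin s, (Fintype.card (Equiv.Perm (Fin (ℓ i - 1))) : ℝ)) = 1 := by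
    have : ∀ i : Fin s, (Fintype.card (Equiv.Perm (Fin (ℓ i - 1))) : ℝ)
        = ((ℓ i - 1).factorial : ℝ) := by
      intro i
      rw [Fintype.card_perm, Fintype.card_fin]
    rw [Finset.prod_congr rfl (fun i _ => this i)]
    rw [inv_mul_cancel₀]
    apply Finset.prod_ne_zero_iff.mpr
    intro i _
    exact Nat.cast_ne_zero.mpr (Nat.factorial_ne_zero _)
  rw [hcard, one_mul]

end WedgeReduction


section FformSection

variable {D s : ℕ} {ℓ : Fin s → ℕ}

/-- interpolating family of sums: columns in `T` are wedged/contracted, the others idle -/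
noncomputable def Fform (hℓ : ∀ i, 0 < ℓ i) (p q : Fin D → ℝ) (α : MF D s ℓ) (T : Finset (Fin s))
    (v : (j : Fin s) → Fin (ℓ j) → Fin D) : ℝ :=
  ∑ k : ∀ i, Fin (ℓ i - 1 + 1), ∑ μ : Fin s → Fin D,
    (∏ i, if i ∈ T then sgnk (k i) * plow D p (v i (ecast hℓ i (k i))) * q (μ i)
      else (((ℓ i - 1 + 1 : ℕ) : ℝ) * ((D : ℕ) : ℝ))⁻¹) *
    α (fun i => if i ∈ T then ins hℓ i (μ i) (del hℓ i (k i) (v i)) else v i)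

lemma Fform_empty (hℓ : ∀ i, 0 < ℓ i) (hD : 0 < D) (p q : Fin D → ℝ) (α : MF D s ℓ)
    (v : (j : Fin s) → Fin (ℓ j) → Fin D) :
    Fform hℓ p q α ∅ v = α v := by
  unfold Fform
  simp only [Finset.notMem_empty, if_false]
  simp only [Finset.sum_const, Finset.card_univ, nsmul_eq_mul, Fintype.card_pi,
    Fintype.card_fin]
  rw [Nat.cast_prod, Nat.cast_prod]
  have key : (∏ i : Fin s, ((ℓ i - 1 + 1 : ℕ) : ℝ)) *
      ((∏ _i : Fin s, ((D : ℕ) : ℝ)) *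
        ((∏ i : Fin s, (((ℓ i - 1 + 1 : ℕ) : ℝ) * ((D : ℕ) : ℝ))⁻¹) * α v)) = α v := by
    rw [show (∏ i : Fin s, ((ℓ i - 1 + 1 : ℕ) : ℝ)) *
        ((∏ _i : Fin s, ((D : ℕ) : ℝ)) *
          ((∏ i : Fin s, (((ℓ i - 1 + 1 : ℕ) : ℝ) * ((D : ℕ) : ℝ))⁻¹) * α v))
      = ((∏ i : Fin s, ((ℓ i - 1 + 1 : ℕ) : ℝ)) * (∏ _i : Fin s, ((D : ℕ) : ℝ)) *
          (∏ i : Fin s, (((ℓ i - 1 + 1 : ℕ) : ℝ) * ((D : ℕ) : ℝ))⁻¹)) * α v from by ring]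
    rw [← Finset.prod_mul_distrib, ← Finset.prod_mul_distrib]
    rw [Finset.prod_congr rfl (fun i _ => ?_), Finset.prod_const_one, one_mul]
    rw [mul_inv_cancel₀]
    apply mul_ne_zero
    · exact Nat.cast_ne_zero.mpr (by omega)
    · exact Nat.cast_ne_zero.mpr (by omega)
  exact key

lemma Fform_insert (hℓ : ∀ i, 0 < ℓ i) (hD : 0 < D) {p q : Fin D → ℝ} {α : MF D s ℓ}
    (hcol : ColAntisym ℓ α) (hw : WedgeZero ℓ p α) (hq : bil D q p = 1)
    (v : (j : Fin s) → Fin (ℓ j) → Fin D) (T : Finset (Fin s)) (j : Fin s) (hj : j ∉ T) :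
    Fform hℓ p q α (insert j T) v = Fform hℓ p q α T v := by
  classical
  set c : Fin s → ℝ := fun i => (((ℓ i - 1 + 1 : ℕ) : ℝ) * ((D : ℕ) : ℝ))⁻¹ with hc
  set S' : (∀ i, Fin (ℓ i - 1 + 1)) → (Fin s → Fin D) → ℝ := fun k μ =>
    (∏ i, if i ∈ insert j T then sgnk (k i) * plow D p (v i (ecast hℓ i (k i))) * q (μ i)
      else c i) *
    α (fun i => if i ∈ insert j T then ins hℓ i (μ i) (del hℓ i (k i) (v i)) else v i)
    with hS'
  set S : (∀ i, Fin (ℓ i - 1 + 1)) → (Fin s → Fin D) → ℝ := fun k μ =>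
    (∏ i, if i ∈ T then sgnk (k i) * plow D p (v i (ecast hℓ i (k i))) * q (μ i)
      else c i) *
    α (fun i => if i ∈ T then ins hℓ i (μ i) (del hℓ i (k i) (v i)) else v i)
    with hS
  have hcK : (0 : ℝ) < (Fintype.card (Fin (ℓ j - 1 + 1)) : ℝ) := by
    rw [Fintype.card_fin]; positivity
  have hcD : (0 : ℝ) < (Fintype.card (Fin D) : ℝ) := by
    rw [Fintype.card_fin]
    exact_mod_cast hD
  -- the core identity
  have core : ∀ (k : ∀ i, Fin (ℓ i - 1 + 1)) (μ : Fin s → Fin D),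
      ∑ x : Fin (ℓ j - 1 + 1), ∑ y : Fin D,
        S' (Function.update k j x) (Function.update μ j y)
      = (Fintype.card (Fin (ℓ j - 1 + 1)) : ℝ) * (Fintype.card (Fin D) : ℝ) * S k μ := by
    intro k μ
    set base : (i : Fin s) → Fin (ℓ i) → Fin D :=
      fun i => if i ∈ T then ins hℓ i (μ i) (del hℓ i (k i) (v i)) else v i with hbase
    set Prest : ℝ := ∏ i ∈ Finset.univ.erase j,
      (if i ∈ T then sgnk (k i) * plow D p (v i (ecast hℓ i (k i))) * q (μ i) else c i)
      with hPrest
    have hbasej : base j = v j := by rw [hbase]; simp [hj]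
    have e_arg : ∀ (x : Fin (ℓ j - 1 + 1)) (y : Fin D),
        (fun i => if i ∈ insert j T then
            ins hℓ i (Function.update μ j y i) (del hℓ i (Function.update k j x i) (v i))
          else v i)
        = Function.update base j (ins hℓ j y (del hℓ j x (v j))) := by
      intro x y
      funext i
      by_cases hij : i = j
      · subst hij
        rw [Function.update_self, if_pos (Finset.mem_insert_self i T),
          Function.update_self, Function.update_self]
      · rw [Function.update_of_ne hij]
        simp only [Finset.mem_insert, hij, false_or, Function.update_of_ne hij, hbase]
    have e_prod : ∀ (x : Fin (ℓ j - 1 + 1)) (y : Fin D),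
        (∏ i, if i ∈ insert j T then
            sgnk (Function.update k j x i) *
              plow D p (v i (ecast hℓ i (Function.update k j x i))) *
              q (Function.update μ j y i)
          else c i)
        = (sgnk x * plow D p (v j (ecast hℓ j x)) * q y) * Prest := by
      intro x y
      rw [← Finset.mul_prod_erase Finset.univ _ (Finset.mem_univ j)]
      congr 1
      · rw [if_pos (Finset.mem_insert_self j T), Function.update_self, Function.update_self]
      · refine Finset.prod_congr rfl fun i hi => ?_
        have hij : i ≠ j := (Finset.mem_erase.mp hi).1
        rw [Function.update_of_ne hij, Function.update_of_ne hij]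
        simp only [Finset.mem_insert, hij, false_or]
    have hmain := main_one' hℓ hcol hw hq j base
    rw [hbasej] at hmain
    calc ∑ x : Fin (ℓ j - 1 + 1), ∑ y : Fin D,
          S' (Function.update k j x) (Function.update μ j y)
        = ∑ x : Fin (ℓ j - 1 + 1), ∑ y : Fin D,
            Prest * (sgnk x * plow D p (v j (ecast hℓ j x)) * q y *
              α (Function.update base j (ins hℓ j y (del hℓ j x (v j))))) := by
          refine Finset.sum_congr rfl fun x _ => Finset.sum_congr rfl fun y _ => ?_
          rw [hS']
          simp only
          rw [e_arg x y, e_prod x y]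
          ring
      _ = Prest * α base := by
          rw [hmain, Finset.mul_sum]
          refine Finset.sum_congr rfl fun x _ => ?_
          rw [Finset.mul_sum]
      _ = (Fintype.card (Fin (ℓ j - 1 + 1)) : ℝ) * (Fintype.card (Fin D) : ℝ) * S k μ := by
          rw [hS]
          simp only
          rw [← Finset.mul_prod_erase Finset.univ _ (Finset.mem_univ j), if_neg hj]
          rw [show (∏ i ∈ Finset.univ.erase j,
              (if i ∈ T then sgnk (k i) * plow D p (v i (ecast hℓ i (k i))) * q (μ i)
                else c i)) = Prest from rfl]
          rw [Fintype.card_fin, Fintype.card_fin, hc]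
          simp only
          rw [show ((ℓ j - 1 + 1 : ℕ) : ℝ) * ((D : ℕ) : ℝ) *
              ((((ℓ j - 1 + 1 : ℕ) : ℝ) * ((D : ℕ) : ℝ))⁻¹ * Prest * α base)
            = (((ℓ j - 1 + 1 : ℕ) : ℝ) * ((D : ℕ) : ℝ) *
                (((ℓ j - 1 + 1 : ℕ) : ℝ) * ((D : ℕ) : ℝ))⁻¹) * (Prest * α base) from by ring]
          rw [mul_inv_cancel₀ (by positivity), one_mul]
  -- now the summation bookkeeping
  have h1 := sum_update_eq (κ := fun i => Fin (ℓ i - 1 + 1)) j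
    (fun k => ∑ μ : Fin s → Fin D, S' k μ)
  have h2 : ∀ k' : ∀ i, Fin (ℓ i - 1 + 1),
      ∑ μ : Fin s → Fin D, ∑ y : Fin D, S' k' (Function.update μ j y)
        = (Fintype.card (Fin D) : ℝ) * ∑ μ : Fin s → Fin D, S' k' μ :=
    fun k' => sum_update_eq (κ := fun _ : Fin s => Fin D) j (fun μ => S' k' μ)
  have hchain : (Fintype.card (Fin (ℓ j - 1 + 1)) : ℝ) * (Fintype.card (Fin D) : ℝ) *
      Fform hℓ p q α (insert j T) v
      = ∑ k : ∀ i, Fin (ℓ i - 1 + 1), ∑ x : Fin (ℓ j - 1 + 1), ∑ μ : Fin s → Fin D,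
          ∑ y : Fin D, S' (Function.update k j x) (Function.update μ j y) := by
    have hA : Fform hℓ p q α (insert j T) v = ∑ k, ∑ μ, S' k μ := rfl
    rw [hA]
    rw [show (Fintype.card (Fin (ℓ j - 1 + 1)) : ℝ) * (Fintype.card (Fin D) : ℝ) *
        (∑ k, ∑ μ, S' k μ)
      = (Fintype.card (Fin D) : ℝ) * ((Fintype.card (Fin (ℓ j - 1 + 1)) : ℝ) *
        (∑ k, ∑ μ, S' k μ)) from by ring]
    rw [← h1]
    rw [Finset.mul_sum]
    refine Finset.sum_congr rfl fun k _ => ?_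
    rw [Finset.mul_sum]
    refine Finset.sum_congr rfl fun x _ => ?_
    rw [← h2 (Function.update k j x)]
  have hchain2 : ∑ k : ∀ i, Fin (ℓ i - 1 + 1), ∑ x : Fin (ℓ j - 1 + 1),
      ∑ μ : Fin s → Fin D, ∑ y : Fin D, S' (Function.update k j x) (Function.update μ j y)
      = (Fintype.card (Fin (ℓ j - 1 + 1)) : ℝ) * (Fintype.card (Fin D) : ℝ) *
        Fform hℓ p q α T v := by
    have hB : Fform hℓ p q α T v = ∑ k, ∑ μ, S k μ := rfl
    rw [hB, Finset.mul_sum]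
    refine Finset.sum_congr rfl fun k _ => ?_
    rw [Finset.sum_comm]
    rw [Finset.mul_sum]
    refine Finset.sum_congr rfl fun μ _ => ?_
    exact core k μ
  rw [hchain2] at hchain
  have hne : (Fintype.card (Fin (ℓ j - 1 + 1)) : ℝ) * (Fintype.card (Fin D) : ℝ) ≠ 0 :=
    ne_of_gt (by positivity)
  exact mul_left_cancel₀ hne hchain

end FformSection

/-- light-cone Lemma: let `p` be a nonzero light-like vector in Minkowski
space and `α` a multiform of multidegree `(ℓ₁,…,ℓ_s)`, all `ℓᵢ > 0`, with
`p̄ᵢ α = 0` and `p̄ᵢ† α = 0` for all `i`. Then there is a second null vector `q` with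
`η(p,q) = 1`, whose associated transverse subspace `V⊥` has dimension `D − 2`, and a
multiform `β` of multidegree `(ℓ₁−1,…,ℓ_s−1)` taking values in `∧(V⊥)` (all of its
indices transverse to `p` and `q`) such that `α = p̄₁ p̄₂ ⋯ p̄ₛ β`. -/
theorem lightcone_lemma {D s : ℕ} (ℓ : Fin s → ℕ) (hℓ : ∀ i, 0 < ℓ i)
    (p : Fin D → ℝ) (hp : p ≠ 0) (hnull : bil D p p = 0)
    (α : MF D s ℓ)
    (hcol : ColAntisym ℓ α)
    (hw : WedgeZero ℓ p α)
    (hc : ContractZero ℓ hℓ p α) :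
    ∃ q : Fin D → ℝ, bil D q q = 0 ∧ bil D p q = 1 ∧
      Module.finrank ℝ (perpSpace D p q) = D - 2 ∧
      ∃ β : MF D s (fun i => ℓ i - 1),
        ColAntisym (fun i => ℓ i - 1) β ∧
        SlotTransverse (fun i => ℓ i - 1) p β ∧
        SlotTransverse (fun i => ℓ i - 1) q β ∧
        α = wedgeAll ℓ hℓ p β := by
  classical
  obtain ⟨hD2, q, hqq, hpq, hqp⟩ := exists_q p hp hnull
  have hD : 0 < D := by omega
  refine ⟨q, hqq, hpq, finrank_perp p q hD2 hnull hqq hpq hqp, betaOf hℓ q α,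
    betaOf_antisym hℓ hcol, betaOf_transverse_p hℓ hcol hc, betaOf_transverse_q hℓ hcol, ?_⟩
  funext v
  rw [wedgeAll_eq hℓ (betaOf_antisym hℓ hcol) v]
  have hFu : ∀ T : Finset (Fin s), Fform hℓ p q α T v = α v := by
    intro T
    induction T using Finset.induction_on with
    | empty => exact Fform_empty hℓ hD p q α v
    | @insert j T hj ih =>
      rw [Fform_insert hℓ hD hcol hw hqp v T j hj]
      exact ih
  have hexp : ∑ k : ∀ i, Fin (ℓ i - 1 + 1),
      (∏ i, sgnk (k i)) * (∏ i, plow D p (v i (ecast hℓ i (k i)))) *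
        betaOf hℓ q α (fun i => del hℓ i (k i) (v i))
      = Fform hℓ p q α Finset.univ v := by
    unfold Fform betaOf
    simp only [Finset.mem_univ, if_true]
    refine Finset.sum_congr rfl fun k _ => ?_
    rw [Finset.mul_sum]
    refine Finset.sum_congr rfl fun μ _ => ?_
    rw [show (∏ i, sgnk (k i) * plow D p (v i (ecast hℓ i (k i))) * q (μ i))
        = (∏ i, sgnk (k i) * plow D p (v i (ecast hℓ i (k i)))) * ∏ i, q (μ i)
      from Finset.prod_mul_distrib, Finset.prod_mul_distrib]
    ring
  rw [hexp, hFu Finset.univ]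

end Stmt15
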